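/- The generating function identity (1 − (x+2)²·y + (x+1)³·y²) · ∑_{n≥1} a(n)·yⁿ = x·y·(x+1)·(1 − x·y) holds in the ring of formal power series in y over ℤ[x]. -/

import Mathlib

open Polynomial

/-- The pair `(a n, b n)` of bracket polynomials of the Celtic knot shadow. -/
noncomputable def ab : ℕ → Polynomial ℤ × Polynomial ℤ
  | 0 => (0, 0)
  | 1 => (X ^ 2 + X, X)
  | n + 2 =>
      ((X ^ 2 + 3 * X + 3) * (ab (n + 1)).1 + (X + 1) * (ab (n + 1)).2,
       (X + 2) * (ab (n + 1)).1 + (X + 1) * (ab (n + 1)).2)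

/-- `a n = ⟨CK₄^{2n}⟩`, the Kauffman bracket of the Celtic knot shadow. -/
noncomputable def a (n : ℕ) : Polynomial ℤ := (ab n).1

/-- `b n = ⟨V₂^{2n-1} CK₄^{2n}⟩`. -/
noncomputable def b (n : ℕ) : Polynomial ℤ := (ab n).2


private lemma arec (n : ℕ) : a (n + 3) = (X + 2) ^ 2 * a (n + 2) - (X + 1) ^ 3 * a (n + 1) := by
  show (ab (n + 1 + 2)).1 = (X + 2) ^ 2 * (ab (n + 2)).1 - (X + 1) ^ 3 * (ab (n + 1)).1
  rw [ab, show n + 1 + 1 = n + 2 from rfl, ab]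
  ring

theorem celtic_generating_function :
    ((1 : PowerSeries (Polynomial ℤ)) - PowerSeries.C ((X + 2) ^ 2) * PowerSeries.X
          + PowerSeries.C ((X + 1) ^ 3) * PowerSeries.X ^ 2)
        * PowerSeries.mk (fun n => if n = 0 then 0 else a n)
      = PowerSeries.C (X * (X + 1)) * PowerSeries.X
          - PowerSeries.C (X * (X + 1) * X) * PowerSeries.X ^ 2 := by
  set S := PowerSeries.mk (fun n => if n = 0 then 0 else a n) with hS
  have h : ((1 : PowerSeries (Polynomial ℤ)) - PowerSeries.C ((X + 2) ^ 2) * PowerSeries.X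
          + PowerSeries.C ((X + 1) ^ 3) * PowerSeries.X ^ 2) * S
      = S - PowerSeries.C ((X + 2) ^ 2) * (PowerSeries.X * S)
          + PowerSeries.C ((X + 1) ^ 3) * (PowerSeries.X * (PowerSeries.X * S)) := by
    ring
  rw [h]
  apply PowerSeries.ext
  intro n
  simp only [map_add, map_sub, PowerSeries.coeff_C_mul]
  match n with
  | 0 =>
    simp [hS, PowerSeries.coeff_zero_X_mul]
  | 1 =>
    rw [PowerSeries.coeff_succ_X_mul 0, PowerSeries.coeff_succ_X_mul 0,
      PowerSeries.coeff_zero_X_mul]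
    simp [hS, a, ab, PowerSeries.coeff_X_pow]
    ring
  | 2 =>
    rw [PowerSeries.coeff_succ_X_mul 1, PowerSeries.coeff_succ_X_mul 1,
      PowerSeries.coeff_succ_X_mul 0]
    simp [hS, PowerSeries.coeff_X_pow, PowerSeries.coeff_X]
    have : a 2 = (X ^ 2 + 3 * X + 3) * a 1 + (X + 1) * b 1 := rfl
    rw [this, show b 1 = X from rfl, show a 1 = X ^ 2 + X from rfl]
    ring
  | (n + 3) =>
    rw [PowerSeries.coeff_succ_X_mul (n + 2), PowerSeries.coeff_succ_X_mul (n + 2),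
      PowerSeries.coeff_succ_X_mul (n + 1)]
    simp [hS, PowerSeries.coeff_X_pow, PowerSeries.coeff_X]
    rw [arec]
    ring
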